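/- Let R be a commutative ring, I a finitely generated ideal of R, J an index type, and (M_j)_{j ∈ J} a family of R-modules each of which is I-adically complete. Then the product module Π_{j ∈ J} M_j is I-adically complete. -/
import Mathlib

lemma mem_span_range_smul_top_iff {R : Type*} [CommRing R] {M : Type*} [AddCommGroup M]
    [Module R M] {n : ℕ} (r : Fin n → R) (x : M) :
    x ∈ Submodule.span R (Set.range r) • (⊤ : Submodule R M) ↔
      ∃ m : Fin n → M, ∑ i, r i • m i = x := by
  constructor
  · intro hx
    refine Submodule.smul_induction_on hx ?_ ?_
    · intro a ha m _
      obtain ⟨c, hc⟩ := Submodule.mem_span_range_iff_exists_fun R |>.mp ha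
      refine ⟨fun i => c i • m, ?_⟩
      rw [← hc, Finset.sum_smul]
      simp [mul_smul, smul_comm (r _) (c _)]
    · rintro x y ⟨mx, rfl⟩ ⟨my, rfl⟩
      exact ⟨fun i => mx i + my i, by simp [smul_add, Finset.sum_add_distrib]⟩
  · rintro ⟨m, rfl⟩
    exact Submodule.sum_mem _ fun i _ =>
      Submodule.smul_mem_smul (Submodule.subset_span ⟨i, rfl⟩) trivial

lemma mem_fg_smul_top_pi_iff {R : Type*} [CommRing R] (K : Ideal R) (hK : K.FG)
    {J : Type*} (M : J → Type*) [∀ j, AddCommGroup (M j)] [∀ j, Module R (M j)]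
    (x : ∀ j, M j) :
    x ∈ K • (⊤ : Submodule R (∀ j, M j)) ↔ ∀ j, x j ∈ K • (⊤ : Submodule R (M j)) := by
  obtain ⟨n, r, rfl⟩ := Submodule.fg_iff_exists_fin_generating_family.mp hK
  simp only [mem_span_range_smul_top_iff]
  constructor
  · rintro ⟨m, rfl⟩ j
    exact ⟨fun i => m i j, by simp⟩
  · intro h
    choose m hm using h
    exact ⟨fun i j => m j i, by ext j; simpa using hm j⟩

/-- For a finitely generated ideal `I` of a commutative ring `R`, a product of
`I`-adically complete `R`-modules is `I`-adically complete. -/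
theorem isAdicComplete_pi_of_fg
    {R : Type*} [CommRing R] (I : Ideal R) (hI : I.FG)
    {J : Type*} (M : J → Type*) [∀ j, AddCommGroup (M j)] [∀ j, Module R (M j)]
    [∀ j, IsAdicComplete I (M j)] :
    IsAdicComplete I (∀ j, M j) := by
  have key : ∀ (n : ℕ) (x : ∀ j, M j),
      x ∈ (I ^ n) • (⊤ : Submodule R (∀ j, M j)) ↔
        ∀ j, x j ∈ (I ^ n) • (⊤ : Submodule R (M j)) :=
    fun n x => mem_fg_smul_top_pi_iff (I ^ n) (Submodule.FG.pow hI n) M x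
  refine { haus' := ?_, prec' := ?_ }
  · intro x hx
    funext j
    refine IsHausdorff.haus (inferInstance : IsHausdorff I (M j)) (x j) fun n => ?_
    simp only [SModEq.zero] at hx ⊢
    exact (key n x).mp (hx n) j
  · intro f hf
    have hfj : ∀ j, ∃ L : M j, ∀ n, f n j ≡ L [SMOD (I ^ n • ⊤ : Submodule R (M j))] := by
      intro j
      refine IsPrecomplete.prec (inferInstance : IsPrecomplete I (M j)) (f := fun n => f n j) ?_
      intro m n hmn
      have := hf hmn
      rw [SModEq.sub_mem] at this ⊢
      exact (key m _).mp this j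
    choose L hL using hfj
    refine ⟨L, fun n => ?_⟩
    rw [SModEq.sub_mem]
    refine (key n _).mpr fun j => ?_
    have := hL j n
    rw [SModEq.sub_mem] at this
    exact this
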